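/- For every θ ∈ (0,1/2] there is a constant C > 0 such that for all ε ∈ (0,1], all t ≥ 0 and all r ≥ 1 with 2εr ≤ ε^θ, one has |ε^{−2}·D_ε(r,t) − e^{−t r²}| ≤ C·( e^{−t/(2ε²)} + ε^{2θ}·e^{−t r²/2} ). -/

import Mathlib

noncomputable def phi (x : ℝ) : ℝ := ∑' j : ℕ, x ^ j / (Nat.factorial (2 * j + 1) : ℝ)

noncomputable def D (ε r t : ℝ) : ℝ :=
  Real.exp (-t / (2 * ε ^ 2)) * t * phi (t ^ 2 * (1 / (4 * ε ^ 4) - r ^ 2 / ε ^ 2))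

lemma phi_sq (y : ℝ) (hy : y ≠ 0) : y * phi (y ^ 2) = Real.sinh y := by
  have h := Real.hasSum_sinh y
  have h2 : HasSum (fun j : ℕ => (y ^ 2) ^ j / (Nat.factorial (2 * j + 1) : ℝ))
      (y⁻¹ * Real.sinh y) := by
    have h3 := h.mul_left y⁻¹
    convert h3 using 2 with j
    · rfl
    rw [← pow_mul]
    field_simp [pow_succ]
    ring
  rw [phi, h2.tsum_eq]
  field_simp

lemma x_le_exp_half (x : ℝ) (hx : 0 ≤ x) : x ≤ Real.exp (x / 2) := by
  have h1 := Real.add_one_le_exp (x / 4)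
  have h2 : (x / 4 + 1) ^ 2 ≤ Real.exp (x / 4) ^ 2 :=
    pow_le_pow_left₀ (by positivity) h1 2
  have h3 : Real.exp (x / 4) ^ 2 = Real.exp (x / 2) := by
    rw [sq, ← Real.exp_add]; ring_nf
  linarith [h2, h3, sq_nonneg (x / 4 - 1)]

set_option maxHeartbeats 1000000 in
theorem dampedWave_symbol_heat_convergence (θ : ℝ) (hθ : θ ∈ Set.Ioc (0:ℝ) (1/2)) :
    ∃ C : ℝ, 0 < C ∧ ∀ ε t r : ℝ, ε ∈ Set.Ioc (0:ℝ) 1 → 0 ≤ t → 1 ≤ r →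
      2 * ε * r ≤ ε ^ θ →
      |D ε r t / ε ^ 2 - Real.exp (-t * r ^ 2)|
        ≤ C * (Real.exp (-t / (2 * ε ^ 2)) + ε ^ (2 * θ) * Real.exp (-t * r ^ 2 / 2)) := by
  obtain ⟨hθ0, hθ2⟩ := hθ
  set σ : ℝ := (1/2 : ℝ) ^ (2*θ) with hσdef
  have hσ1 : σ < 1 := Real.rpow_lt_one (by norm_num) (by norm_num) (by linarith)
  have hσ0 : 0 ≤ σ := Real.rpow_nonneg (by norm_num) _
  set q0 : ℝ := Real.sqrt (1 - σ) with hq0def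
  have hq0 : 0 < q0 := Real.sqrt_pos.mpr (by linarith)
  refine ⟨2 / q0, by positivity, ?_⟩
  rintro ε t r ⟨hε0, hε1⟩ ht hr hcon
  have hεθ1 : ε ^ θ ≤ 1 := Real.rpow_le_one hε0.le hε1 hθ0.le
  have hε2 : ε ≤ 1/2 := by
    have h := mul_le_mul_of_nonneg_left hr (by positivity : (0:ℝ) ≤ 2*ε)
    rw [mul_one] at h
    linarith
  set s : ℝ := 4 * ε^2 * r^2 with hsdef
  have hs0 : 0 ≤ s := by positivity
  have h2θ : ε ^ (2*θ) = (ε ^ θ) ^ 2 := by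
    rw [← Real.rpow_natCast (ε ^ θ) 2, ← Real.rpow_mul hε0.le]
    norm_num
    ring_nf
  have hsθ : s ≤ ε ^ (2*θ) := by
    rw [h2θ]
    have h : s = (2 * ε * r) ^ 2 := by rw [hsdef]; ring
    rw [h]
    exact pow_le_pow_left₀ (by positivity) hcon 2
  have hεθσ : ε ^ (2*θ) ≤ σ := Real.rpow_le_rpow hε0.le hε2 (by linarith)
  have hsσ : s ≤ σ := le_trans hsθ hεθσ
  have hs1 : s < 1 := lt_of_le_of_lt hsσ hσ1
  set q : ℝ := Real.sqrt (1 - s) with hqdef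
  have hq2 : q^2 = 1 - s := Real.sq_sqrt (by linarith)
  have hqq0 : q0 ≤ q := Real.sqrt_le_sqrt (by linarith)
  have hqpos : 0 < q := lt_of_lt_of_le hq0 hqq0
  have hq1 : q ≤ 1 := Real.sqrt_le_one.mpr (by linarith)
  have hqlow : 1 - s ≤ q := by
    have h := mul_nonneg hqpos.le (by linarith : (0:ℝ) ≤ 1 - q)
    linarith [hq2, h]
  have key2 : (1-q)^2 = 2 - 2*q - 4*ε^2*r^2 := by
    have hsd : s = 4*ε^2*r^2 := hsdef
    linear_combination hq2 - hsd
  set μ : ℝ := (1-q)/(2*ε^2) with hμdef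
  set ν : ℝ := (1+q)/(2*ε^2) with hνdef
  -- key identity
  have key : D ε r t / ε ^ 2 = (Real.exp (-μ * t) - Real.exp (-ν * t)) / q := by
    rcases eq_or_lt_of_le ht with h0 | htpos
    · rw [← h0]; simp [D]
    · set y : ℝ := q * t / (2 * ε^2) with hydef
      have hy : 0 < y := by positivity
      have harg : t ^ 2 * (1 / (4 * ε ^ 4) - r ^ 2 / ε ^ 2) = y ^ 2 := by
        have hq2' : q^2 = 1 - 4*ε^2*r^2 := by rw [hq2, hsdef]
        rw [hydef]
        field_simp
        linear_combination (-(4:ℝ)) * hq2'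
      have hphi : t * phi (t ^ 2 * (1 / (4 * ε ^ 4) - r ^ 2 / ε ^ 2))
          = (2 * ε^2 / q) * Real.sinh y := by
        rw [harg]
        have hps := phi_sq y hy.ne'
        have hty : t = (2 * ε^2 / q) * y := by
          rw [hydef]; field_simp
        rw [hty, mul_assoc, hps]
      rw [D, mul_assoc, hphi, Real.sinh_eq]
      have e1 : Real.exp (-t / (2 * ε ^ 2)) * Real.exp y = Real.exp (-μ * t) := by
        rw [← Real.exp_add, hμdef, hydef]
        congr 1
        field_simp
        ring
      have e2 : Real.exp (-t / (2 * ε ^ 2)) * Real.exp (-y) = Real.exp (-ν * t) := by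
        rw [← Real.exp_add, hνdef, hydef]
        congr 1
        field_simp
        ring
      rw [← e1, ← e2]
      field_simp
  rw [key]
  set A := Real.exp (-μ * t) with hA
  set B := Real.exp (-ν * t) with hBdef
  set Er := Real.exp (-t * r^2) with hEr
  set Eh := Real.exp (-t * r^2 / 2) with hEh
  set E1 := Real.exp (-t / (2 * ε^2)) with hE1
  have h2e : (0:ℝ) < 2*ε^2 := by positivity
  have hErEh : Er ≤ Eh := Real.exp_le_exp.mpr (by
    have := mul_nonneg ht (sq_nonneg r); linarith)
  have hB : B ≤ E1 := by
    apply Real.exp_le_exp.mpr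
    rw [show -ν * t = (-(1+q) * t)/(2*ε^2) from by rw [hνdef]; ring,
      div_le_div_iff₀ h2e h2e]
    linarith [mul_nonneg (mul_nonneg hqpos.le ht) h2e.le]
  have hμr : r^2 ≤ μ := by
    rw [hμdef, le_div_iff₀ h2e]
    have hsd : s = 4*ε^2*r^2 := hsdef
    linarith [key2, sq_nonneg (1-q), hsd]
  have hμr2 : μ ≤ r^2 + s * r^2 := by
    rw [hμdef, div_le_iff₀ h2e]
    have hid : (r^2 + s*r^2)*(2*ε^2) = s/2 + s^2/2 := by rw [hsdef]; ring
    have h7 : (1-q)^2 ≤ s^2 := by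
      have h8 := mul_self_le_mul_self (by linarith : (0:ℝ) ≤ 1-q) (by linarith : 1-q ≤ s)
      rw [← sq, ← sq] at h8
      exact h8
    have hsd : s = 4*ε^2*r^2 := hsdef
    rw [hid]
    linarith [key2, h7, hsd]
  have hAEr : A ≤ Er := Real.exp_le_exp.mpr (by linarith [mul_nonneg ht (sub_nonneg.mpr hμr)])
  have hEpos : 0 ≤ ε ^ (2*θ) := Real.rpow_nonneg hε0.le _
  -- Er - A ≤ ε^(2θ) * Eh
  have hErA : Er - A ≤ ε ^ (2*θ) * Eh := by
    have h1 : Er - A = Er * (1 - Real.exp (-(μ - r^2) * t)) := by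
      rw [mul_sub, mul_one, hEr, hA, ← Real.exp_add]
      ring_nf
    have h2 : 1 - Real.exp (-(μ - r^2) * t) ≤ (μ - r^2) * t := by
      have := Real.add_one_le_exp (-(μ - r^2) * t)
      linarith
    have h3 : Er - A ≤ Er * ((μ - r^2) * t) := by
      rw [h1]
      exact mul_le_mul_of_nonneg_left h2 (Real.exp_nonneg _)
    have h4 : (μ - r^2) * t ≤ s * (t * r^2) := by
      linarith [mul_le_mul_of_nonneg_right (by linarith : μ - r^2 ≤ s * r^2) ht]
    have h5 : t * r^2 * Er ≤ Eh := by
      have hx := x_le_exp_half (t * r^2) (by positivity)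
      calc t * r^2 * Er ≤ Real.exp (t * r^2 / 2) * Er :=
            mul_le_mul_of_nonneg_right hx (Real.exp_nonneg _)
        _ = Eh := by rw [hEr, hEh, ← Real.exp_add]; ring_nf
    calc Er - A ≤ Er * ((μ - r^2) * t) := h3
      _ ≤ Er * (s * (t * r^2)) :=
          mul_le_mul_of_nonneg_left h4 (Real.exp_nonneg _)
      _ = s * (t * r^2 * Er) := by ring
      _ ≤ ε ^ (2*θ) * (t * r^2 * Er) := mul_le_mul_of_nonneg_right hsθ (by positivity)
      _ ≤ ε ^ (2*θ) * Eh := mul_le_mul_of_nonneg_left h5 hEpos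
  have hq1sub : 1 - q ≤ s := by linarith
  have hErq : Er * (1 - q) ≤ ε ^ (2*θ) * Eh := by
    calc Er * (1 - q) ≤ Eh * (ε ^ (2*θ)) :=
          mul_le_mul hErEh (le_trans hq1sub hsθ) (by linarith) (Real.exp_nonneg _)
      _ = ε ^ (2*θ) * Eh := by ring
  -- assemble
  have decompose : (A - B)/q - Er = ((A - Er) + Er*(1-q) - B)/q := by
    field_simp
    ring
  rw [decompose, abs_div, abs_of_pos hqpos]
  have hnum : |(A - Er) + Er*(1-q) - B| ≤ (Er - A) + Er*(1-q) + B := by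
    have h1 : 0 ≤ Er*(1-q) := mul_nonneg (Real.exp_nonneg _) (by linarith)
    have h2 : 0 ≤ B := Real.exp_nonneg _
    have h3 : 0 ≤ A := Real.exp_nonneg _
    rw [abs_le]
    constructor <;> linarith
  have hnum2 : (Er - A) + Er*(1-q) + B ≤ 2 * (E1 + ε ^ (2*θ) * Eh) := by
    have hE1nn : 0 ≤ E1 := Real.exp_nonneg _
    have hEhnn : 0 ≤ ε ^ (2*θ) * Eh := mul_nonneg hEpos (Real.exp_nonneg _)
    linarith
  calc |(A - Er) + Er*(1-q) - B| / q ≤ (2 * (E1 + ε ^ (2*θ) * Eh)) / q0 := by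
        apply div_le_div₀ (by positivity) (le_trans hnum hnum2) hq0 hqq0
    _ = 2 / q0 * (E1 + ε ^ (2*θ) * Eh) := by ring
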